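/- Let n, V, H be positive integers, E ∈ [−1,1]^{H×n} with columns e⁽ⁱ⁾, and B ∈ ℝ^{V×H} with rows b_v, such that there exists X ∈ [−1,1]^{V×n} with (1/n)·E·x_v = b_v for all v. Suppose for each v ∈ {1,…,V} the vector w_v* ∈ ℝ^H attains inf_{w ∈ ℝ^H} γ^E(w, b_v). Define reconstructions x̃_v⁽ⁱ⁾* = (1 − e^{−w_v*ᵀe⁽ⁱ⁾})/(1 + e^{−w_v*ᵀe⁽ⁱ⁾}) for each i ∈ {1,…,n} and v ∈ {1,…,V}. Then the worst-case loss of these reconstructions, namely the supremum over X ∈ [−1,1]^{V×n} satisfying (1/n)·E·x_v = b_v for all v of (1/n)·Σ_{i=1}^n ℓ(x⁽ⁱ⁾, x̃⁽ⁱ⁾*), equals (1/2)·Σ_{v=1}^V γ^E(w_v*, b_v); in particular these reconstructions attain the minimax value of the game. -/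

import Mathlib

/-- The potential well `Ψ(m) = ln(1+eᵐ) + ln(1+e⁻ᵐ)`. -/
noncomputable def Psi (m : ℝ) : ℝ := Real.log (1 + Real.exp m) + Real.log (1 + Real.exp (-m))

/-- Cross-entropy reconstruction loss between `x ∈ [-1,1]^V` and `x̃ ∈ (-1,1)^V`. -/
noncomputable def xent {V : ℕ} (x xt : Fin V → ℝ) : ℝ :=
  ∑ v, ((1 + x v) / 2 * Real.log (2 / (1 + xt v)) + (1 - x v) / 2 * Real.log (2 / (1 - xt v)))

/-- The bitwise slack function `γ^E(w, b) = -bᵀw + (1/n)·Σᵢ Ψ(wᵀe⁽ⁱ⁾)`. -/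
noncomputable def slack {n H : ℕ} (E : Fin H → Fin n → ℝ) (w b : Fin H → ℝ) : ℝ :=
  -(∑ h, b h * w h) + (1 / (n : ℝ)) * ∑ i, Psi (∑ h, w h * E h i)

lemma psi_hasDerivAt (m : ℝ) :
    HasDerivAt Psi ((1 - Real.exp (-m)) / (1 + Real.exp (-m))) m := by
  have h1 : HasDerivAt (fun x : ℝ => Real.log (1 + Real.exp x))
      (Real.exp m / (1 + Real.exp m)) m :=
    ((Real.hasDerivAt_exp m).const_add 1).log (by positivity)
  have h2 : HasDerivAt (fun x : ℝ => Real.exp (-x)) (-Real.exp (-m)) m := by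
    exact ((Real.hasDerivAt_exp (-m)).comp m (hasDerivAt_neg m)).congr_deriv (by simp)
  have h3 : HasDerivAt (fun x : ℝ => Real.log (1 + Real.exp (-x)))
      (-Real.exp (-m) / (1 + Real.exp (-m))) m :=
    (h2.const_add 1).log (by positivity)
  have := h1.add h3
  refine (this : HasDerivAt Psi _ m).congr_deriv ?_
  have hm : Real.exp m * Real.exp (-m) = 1 := by
    rw [← Real.exp_add]; simp
  have p1 : (0:ℝ) < 1 + Real.exp m := by positivity
  have p2 : (0:ℝ) < 1 + Real.exp (-m) := by positivity
  field_simp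
  ring_nf
  nlinarith [hm]

lemma tanh_mem (m : ℝ) :
    (1 - Real.exp (-m)) / (1 + Real.exp (-m)) ∈ Set.Ioo (-1 : ℝ) 1 := by
  have h : (0:ℝ) < Real.exp (-m) := Real.exp_pos _
  constructor
  · rw [lt_div_iff₀ (by linarith)]; linarith
  · rw [div_lt_one (by linarith)]; linarith

lemma loss_id (m x : ℝ) :
    (1 + x) / 2 * Real.log (2 / (1 + (1 - Real.exp (-m)) / (1 + Real.exp (-m)))) +
      (1 - x) / 2 * Real.log (2 / (1 - (1 - Real.exp (-m)) / (1 + Real.exp (-m))))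
    = Psi m / 2 - x * m / 2 := by
  have h : (0:ℝ) < Real.exp (-m) := Real.exp_pos _
  have hp : (0:ℝ) < 1 + Real.exp (-m) := by linarith
  have e1 : 2 / (1 + (1 - Real.exp (-m)) / (1 + Real.exp (-m))) = 1 + Real.exp (-m) := by
    field_simp
    ring
  have e2 : 2 / (1 - (1 - Real.exp (-m)) / (1 + Real.exp (-m))) = 1 + Real.exp m := by
    rw [Real.exp_neg] at *
    have hm : (0:ℝ) < Real.exp m := Real.exp_pos _
    field_simp
    ring
  have e3 : Real.log (1 + Real.exp m) - Real.log (1 + Real.exp (-m)) = m := by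
    rw [← Real.log_div (by positivity) (by positivity)]
    have : (1 + Real.exp m) / (1 + Real.exp (-m)) = Real.exp m := by
      rw [Real.exp_neg]
      have hm : (0:ℝ) < Real.exp m := Real.exp_pos _
      field_simp; ring
    rw [this, Real.log_exp]
  rw [e1, e2, Psi]
  linear_combination (-(x/2)) * e3

lemma gibbs (x xt : ℝ) (hx : x ∈ Set.Ioo (-1:ℝ) 1) (hxt : xt ∈ Set.Ioo (-1:ℝ) 1) :
    (1 + x) / 2 * Real.log (2 / (1 + x)) + (1 - x) / 2 * Real.log (2 / (1 - x))
    ≤ (1 + x) / 2 * Real.log (2 / (1 + xt)) + (1 - x) / 2 * Real.log (2 / (1 - xt)) := by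
  obtain ⟨hx1, hx2⟩ := hx
  obtain ⟨ht1, ht2⟩ := hxt
  have p1 : (0:ℝ) < 1 + x := by linarith
  have p2 : (0:ℝ) < 1 - x := by linarith
  have p3 : (0:ℝ) < 1 + xt := by linarith
  have p4 : (0:ℝ) < 1 - xt := by linarith
  have h1 : Real.log ((1 + xt) / (1 + x)) ≤ (1 + xt) / (1 + x) - 1 :=
    Real.log_le_sub_one_of_pos (by positivity)
  have h2 : Real.log ((1 - xt) / (1 - x)) ≤ (1 - xt) / (1 - x) - 1 :=
    Real.log_le_sub_one_of_pos (by positivity)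
  rw [Real.log_div (by positivity) (by positivity)] at h1 h2
  rw [Real.log_div two_ne_zero (by positivity), Real.log_div two_ne_zero (by positivity),
    Real.log_div two_ne_zero (by positivity), Real.log_div two_ne_zero (by positivity)]
  have h1' : (1 + x) * (Real.log (1 + xt) - Real.log (1 + x)) ≤ xt - x := by
    have := mul_le_mul_of_nonneg_left h1 p1.le
    calc (1 + x) * (Real.log (1 + xt) - Real.log (1 + x)) ≤ (1 + x) * ((1 + xt)/(1 + x) - 1) := this
    _ = xt - x := by field_simp; ring
  have h2' : (1 - x) * (Real.log (1 - xt) - Real.log (1 - x)) ≤ x - xt := by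
    have := mul_le_mul_of_nonneg_left h2 p2.le
    calc (1 - x) * (Real.log (1 - xt) - Real.log (1 - x)) ≤ (1 - x) * ((1 - xt)/(1 - x) - 1) := this
    _ = x - xt := by field_simp; ring
  nlinarith

set_option maxHeartbeats 1000000 in
/-- If `w_v*` attains the infimum of the bitwise slack function for each `v`, then the
logistic-neuron reconstructions `x̃_v⁽ⁱ⁾ = (1 - e^{-w_v*ᵀe⁽ⁱ⁾})/(1 + e^{-w_v*ᵀe⁽ⁱ⁾})`
have worst-case loss `(1/2)·Σ_v γ^E(w_v*, b_v)`, which is the minimax value of the game. -/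
theorem optimal_reconstructions_attain_minimax
    (n V H : ℕ) (hn : 0 < n) (hV : 0 < V) (hH : 0 < H)
    (E : Fin H → Fin n → ℝ) (hE : ∀ h i, E h i ∈ Set.Icc (-1 : ℝ) 1)
    (B : Fin V → Fin H → ℝ)
    (hfeas : ∃ X : Fin V → Fin n → ℝ,
      (∀ v i, X v i ∈ Set.Icc (-1 : ℝ) 1) ∧
      ∀ v h, (1 / (n : ℝ)) * ∑ i, E h i * X v i = B v h)
    (wstar : Fin V → Fin H → ℝ)
    (hws : ∀ v, ∀ w : Fin H → ℝ, slack E (wstar v) (B v) ≤ slack E w (B v))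
    (xt : Fin V → Fin n → ℝ)
    (hxt : ∀ v i, xt v i =
      (1 - Real.exp (-(∑ h, wstar v h * E h i))) / (1 + Real.exp (-(∑ h, wstar v h * E h i)))) :
    (⨆ X : {X : Fin V → Fin n → ℝ //
        (∀ v i, X v i ∈ Set.Icc (-1 : ℝ) 1) ∧
        ∀ v h, (1 / (n : ℝ)) * ∑ i, E h i * X v i = B v h},
      (1 / (n : ℝ)) * ∑ i, xent (fun v => X.1 v i) (fun v => xt v i))
      = (1 / 2) * ∑ v, slack E (wstar v) (B v)
    ∧
    (⨆ X : {X : Fin V → Fin n → ℝ //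
        (∀ v i, X v i ∈ Set.Icc (-1 : ℝ) 1) ∧
        ∀ v h, (1 / (n : ℝ)) * ∑ i, E h i * X v i = B v h},
      (1 / (n : ℝ)) * ∑ i, xent (fun v => X.1 v i) (fun v => xt v i))
      = (⨅ Xt : {Xt : Fin V → Fin n → ℝ // ∀ v i, Xt v i ∈ Set.Ioo (-1 : ℝ) 1},
          ⨆ X : {X : Fin V → Fin n → ℝ //
              (∀ v i, X v i ∈ Set.Icc (-1 : ℝ) 1) ∧
              ∀ v h, (1 / (n : ℝ)) * ∑ i, E h i * X v i = B v h},
            (1 / (n : ℝ)) * ∑ i, xent (fun v => X.1 v i) (fun v => Xt.1 v i)) := by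
  have hn' : (n:ℝ) ≠ 0 := Nat.cast_ne_zero.mpr hn.ne'
  -- membership of the reconstructions in (-1,1)
  have hxtIoo : ∀ v i, xt v i ∈ Set.Ioo (-1:ℝ) 1 := fun v i => by
    rw [hxt]; exact tanh_mem _
  -- the reconstructions are themselves feasible (first-order condition)
  have hfeasxt : ∀ v h, (1 / (n : ℝ)) * ∑ i, E h i * xt v i = B v h := by
    intro v h
    set g : ℝ → ℝ := fun t =>
      -((∑ h', B v h' * wstar v h') + t * B v h) +
        (1 / (n:ℝ)) * ∑ i, Psi ((∑ h', wstar v h' * E h' i) + t * E h i) with hg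
    have hgt : ∀ t, g t = slack E (fun h' => wstar v h' + t * (if h' = h then 1 else 0)) (B v) := by
      intro t
      simp only [hg, slack]
      congr 2
      · rw [Finset.sum_congr rfl (fun h' _ => mul_add (B v h') (wstar v h') _),
          Finset.sum_add_distrib]
        congr 1
        simp [mul_ite, mul_comm, Finset.sum_ite_eq]
      · apply Finset.sum_congr rfl
        intro i _
        congr 1
        rw [Finset.sum_congr rfl (fun h' _ => add_mul (wstar v h') _ (E h' i)),
          Finset.sum_add_distrib]
        congr 1
        simp [ite_mul, mul_comm, mul_assoc, Finset.sum_ite_eq]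
    have hg0 : g 0 = slack E (wstar v) (B v) := by
      rw [hgt 0]
      congr 1
      funext h'
      simp
    have hmin : IsLocalMin g 0 := by
      apply Filter.Eventually.of_forall
      intro t
      rw [hg0, hgt t]
      exact hws v _
    have hder : HasDerivAt g
        (-B v h + (1 / (n:ℝ)) * ∑ i,
          ((1 - Real.exp (-(∑ h', wstar v h' * E h' i))) /
            (1 + Real.exp (-(∑ h', wstar v h' * E h' i))) * E h i)) 0 := by
      have hA : HasDerivAt (fun t : ℝ => -((∑ h', B v h' * wstar v h') + t * B v h))
          (-B v h) 0 := by
        exact (((hasDerivAt_id (0:ℝ)).mul_const (B v h)).const_add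
          (∑ h', B v h' * wstar v h')).fun_neg.congr_deriv (by simp)
      have hB : ∀ i : Fin n, HasDerivAt
          (fun t : ℝ => Psi ((∑ h', wstar v h' * E h' i) + t * E h i))
          ((1 - Real.exp (-(∑ h', wstar v h' * E h' i))) /
            (1 + Real.exp (-(∑ h', wstar v h' * E h' i))) * E h i) 0 := by
        intro i
        have hin : HasDerivAt (fun t : ℝ => (∑ h', wstar v h' * E h' i) + t * E h i)
            (E h i) 0 := by
          simpa using ((hasDerivAt_id (0:ℝ)).mul_const (E h i)).const_add
            (∑ h', wstar v h' * E h' i)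
        have := (psi_hasDerivAt ((∑ h', wstar v h' * E h' i) + 0 * E h i)).comp 0 hin
        exact this.congr_deriv (by simp)
      exact hA.add ((HasDerivAt.fun_sum (fun i _ => hB i)).const_mul (1 / (n:ℝ)))
    have hD : -B v h + (1 / (n:ℝ)) * ∑ i,
        ((1 - Real.exp (-(∑ h', wstar v h' * E h' i))) /
          (1 + Real.exp (-(∑ h', wstar v h' * E h' i))) * E h i) = 0 := by
      rw [← hder.deriv]
      exact hmin.deriv_eq_zero
    have : (1 / (n:ℝ)) * ∑ i, E h i * xt v i
        = (1 / (n:ℝ)) * ∑ i,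
          ((1 - Real.exp (-(∑ h', wstar v h' * E h' i))) /
            (1 + Real.exp (-(∑ h', wstar v h' * E h' i))) * E h i) := by
      congr 1
      exact Finset.sum_congr rfl fun i _ => by rw [hxt v i, mul_comm]
    rw [this]
    linarith [hD]
  -- the loss against the reconstructions is constant on the feasible set
  have hconst : ∀ X : Fin V → Fin n → ℝ,
      (∀ v h, (1 / (n : ℝ)) * ∑ i, E h i * X v i = B v h) →
      (1 / (n : ℝ)) * ∑ i, xent (fun v => X v i) (fun v => xt v i)
        = (1 / 2) * ∑ v, slack E (wstar v) (B v) := by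
    intro X hX
    have step1 : ∀ i, xent (fun v => X v i) (fun v => xt v i)
        = ∑ v, (Psi (∑ h, wstar v h * E h i) / 2 - X v i * (∑ h, wstar v h * E h i) / 2) := by
      intro i
      unfold xent
      apply Finset.sum_congr rfl
      intro v _
      simp only [hxt v i]
      exact loss_id _ _
    have key : ∀ v, ∑ i, (Psi (∑ h, wstar v h * E h i) / 2
          - X v i * (∑ h, wstar v h * E h i) / 2)
        = (n:ℝ) * (slack E (wstar v) (B v) / 2) := by
      intro v
      have hsum : ∑ i, X v i * (∑ h, wstar v h * E h i)
          = (n:ℝ) * ∑ h, B v h * wstar v h := by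
        have : ∀ i, X v i * (∑ h, wstar v h * E h i)
            = ∑ h, wstar v h * (E h i * X v i) := by
          intro i; rw [Finset.mul_sum]; apply Finset.sum_congr rfl; intro h _; ring
        rw [Finset.sum_congr rfl (fun i _ => this i), Finset.sum_comm]
        rw [Finset.mul_sum]
        apply Finset.sum_congr rfl
        intro h _
        rw [← Finset.mul_sum]
        have hb : ∑ i, E h i * X v i = (n:ℝ) * B v h := by
          have := hX v h
          field_simp at this
          linarith [this]
        rw [hb]; ring
      rw [Finset.sum_sub_distrib, ← Finset.sum_div, ← Finset.sum_div, hsum, slack]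
      field_simp
      ring
    rw [Finset.mul_sum, Finset.sum_congr rfl (fun i _ => congrArg _ (step1 i))]
    rw [← Finset.mul_sum, Finset.sum_comm]
    rw [Finset.sum_congr rfl (fun v _ => key v), Finset.mul_sum, Finset.mul_sum]
    apply Finset.sum_congr rfl
    intro v _
    field_simp
  obtain ⟨X₀, hX₀⟩ := hfeas
  haveI hne : Nonempty {X : Fin V → Fin n → ℝ //
      (∀ v i, X v i ∈ Set.Icc (-1 : ℝ) 1) ∧
      ∀ v h, (1 / (n : ℝ)) * ∑ i, E h i * X v i = B v h} := ⟨⟨X₀, hX₀.1, hX₀.2⟩⟩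
  set xtS : {X : Fin V → Fin n → ℝ //
      (∀ v i, X v i ∈ Set.Icc (-1 : ℝ) 1) ∧
      ∀ v h, (1 / (n : ℝ)) * ∑ i, E h i * X v i = B v h} :=
    ⟨xt, fun v i => Set.mem_Icc.mpr ⟨(hxtIoo v i).1.le, (hxtIoo v i).2.le⟩, hfeasxt⟩ with hxtS
  have part1 : (⨆ X : {X : Fin V → Fin n → ℝ //
        (∀ v i, X v i ∈ Set.Icc (-1 : ℝ) 1) ∧
        ∀ v h, (1 / (n : ℝ)) * ∑ i, E h i * X v i = B v h},
      (1 / (n : ℝ)) * ∑ i, xent (fun v => X.1 v i) (fun v => xt v i))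
      = (1 / 2) * ∑ v, slack E (wstar v) (B v) := by
    calc _ = ⨆ _ : {X : Fin V → Fin n → ℝ //
        (∀ v i, X v i ∈ Set.Icc (-1 : ℝ) 1) ∧
        ∀ v h, (1 / (n : ℝ)) * ∑ i, E h i * X v i = B v h},
          (1 / 2) * ∑ v, slack E (wstar v) (B v) :=
        iSup_congr (fun X => hconst X.1 X.2.2)
      _ = _ := ciSup_const
  -- boundedness of the loss over the feasible set
  have hbdd : ∀ Xt : Fin V → Fin n → ℝ,
      BddAbove (Set.range fun X : {X : Fin V → Fin n → ℝ //
          (∀ v i, X v i ∈ Set.Icc (-1 : ℝ) 1) ∧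
          ∀ v h, (1 / (n : ℝ)) * ∑ i, E h i * X v i = B v h} =>
        (1 / (n : ℝ)) * ∑ i, xent (fun v => X.1 v i) (fun v => Xt v i)) := by
    intro Xt
    refine ⟨(1 / (n:ℝ)) * ∑ i, ∑ v,
      (|Real.log (2 / (1 + Xt v i))| + |Real.log (2 / (1 - Xt v i))|), ?_⟩
    rintro y ⟨X, rfl⟩
    dsimp only
    apply mul_le_mul_of_nonneg_left _ (by positivity)
    apply Finset.sum_le_sum
    intro i _
    unfold xent
    apply Finset.sum_le_sum
    intro v _
    obtain ⟨hx1, hx2⟩ := Set.mem_Icc.mp (X.2.1 v i)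
    have hterm : ∀ c A : ℝ, 0 ≤ c → c ≤ 1 → c * A ≤ |A| := by
      intro c A hc hc1
      calc c * A ≤ c * |A| := mul_le_mul_of_nonneg_left (le_abs_self A) hc
      _ ≤ 1 * |A| := mul_le_mul_of_nonneg_right hc1 (abs_nonneg A)
      _ = |A| := one_mul _
    have t1 := hterm ((1 + X.1 v i)/2) (Real.log (2 / (1 + Xt v i)))
      (by linarith) (by linarith)
    have t2 := hterm ((1 - X.1 v i)/2) (Real.log (2 / (1 - Xt v i)))
      (by linarith) (by linarith)
    linarith
  -- lower bound for the sup against any candidate reconstruction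
  have hFge : ∀ Xt : {Xt : Fin V → Fin n → ℝ // ∀ v i, Xt v i ∈ Set.Ioo (-1 : ℝ) 1},
      (1 / 2) * ∑ v, slack E (wstar v) (B v)
      ≤ ⨆ X : {X : Fin V → Fin n → ℝ //
          (∀ v i, X v i ∈ Set.Icc (-1 : ℝ) 1) ∧
          ∀ v h, (1 / (n : ℝ)) * ∑ i, E h i * X v i = B v h},
        (1 / (n : ℝ)) * ∑ i, xent (fun v => X.1 v i) (fun v => Xt.1 v i) := by
    intro Xt
    have hgibbs : (1 / 2) * ∑ v, slack E (wstar v) (B v)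
        ≤ (1 / (n : ℝ)) * ∑ i, xent (fun v => xt v i) (fun v => Xt.1 v i) := by
      rw [← hconst xt hfeasxt]
      apply mul_le_mul_of_nonneg_left _ (by positivity)
      apply Finset.sum_le_sum
      intro i _
      unfold xent
      apply Finset.sum_le_sum
      intro v _
      exact gibbs _ _ (hxtIoo v i) (Xt.2 v i)
    exact hgibbs.trans (le_ciSup (hbdd Xt.1) xtS)
  haveI : Nonempty {Xt : Fin V → Fin n → ℝ // ∀ v i, Xt v i ∈ Set.Ioo (-1 : ℝ) 1} :=
    ⟨⟨xt, hxtIoo⟩⟩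
  refine ⟨part1, part1.trans ?_⟩
  apply le_antisymm
  · exact le_ciInf hFge
  · refine ciInf_le_of_le ?_ ⟨xt, hxtIoo⟩ ?_
    · refine ⟨(1 / 2) * ∑ v, slack E (wstar v) (B v), ?_⟩
      rintro y ⟨Xt, rfl⟩
      exact hFge Xt
    · exact le_of_eq part1
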